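/- arXiv:1706.04519 — 2 statements merged into one kernel-verified Lean document; each statement's English description precedes it below -/
import Mathlib

section
/- Let B be a standard one-dimensional Brownian motion started at 0, fix γ ∈ [0, 1/2), and let M(t) = |{0 < s < t : |B_s| ≤ s^γ}|. Then there is a finite constant C > 0 such that E[M(t)²] ≤ C·t^{2γ+1} for all t ≥ 1; in particular limsup_{t→∞} E[(M(t)·t^{−(γ+1/2)})²] < ∞. -/
open MeasureTheory Filter Set ProbabilityTheory
open scoped ENNReal NNReal

noncomputable section

/-- The annuli `S₀ = [0,1)` and `Sₙ = [2^(n-1), 2^n)` for `n ≥ 1`. -/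
def macroAnnulus (n : ℕ) : Set ℝ :=
  if n = 0 then Set.Ico 0 1 else Set.Ico ((2 : ℝ) ^ (n - 1)) ((2 : ℝ) ^ n)

/-- `ν_ρ^n(E)`: the infimum of `Σ (|Q_i|/2^n)^ρ` over all finite coverings of `E ∩ Sₙ`
by nontrivial intervals with integer endpoints contained in `Sₙ`. -/
def nuN (ρ : ℝ) (n : ℕ) (E : Set ℝ) : ℝ≥0∞ :=
  ⨅ (Q : Finset (ℤ × ℤ))
    (_ : ∀ p ∈ Q, p.1 < p.2 ∧ Set.Ico (p.1 : ℝ) (p.2 : ℝ) ⊆ macroAnnulus n)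
    (_ : E ∩ macroAnnulus n ⊆ ⋃ p ∈ Q, Set.Ico (p.1 : ℝ) (p.2 : ℝ)),
    ∑ p ∈ Q, ENNReal.ofReal ((((p.2 : ℝ) - (p.1 : ℝ)) / 2 ^ n) ^ ρ)

/-- The macroscopic Hausdorff dimension. -/
def macroDimH (E : Set ℝ) : ℝ :=
  sInf {ρ : ℝ | 0 ≤ ρ ∧ ∑' n : ℕ, nuN ρ n E < ⊤}

/-- A standard one-dimensional Brownian motion started at 0, defined on a probability
space `(Ω, P)`: continuous paths (on `t ≥ 0`), Gaussian increments `B_t - B_s ∼ N(0, t-s)`,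
and independent increments. -/
def IsStandardBrownianMotion {Ω : Type*} [MeasurableSpace Ω] (P : Measure Ω)
    (B : ℝ → Ω → ℝ) : Prop :=
  IsProbabilityMeasure P ∧
  (∀ t : ℝ, Measurable (B t)) ∧
  (∀ ω, B 0 ω = 0) ∧
  (∀ ω, ContinuousOn (fun t => B t ω) (Set.Ici 0)) ∧
  (∀ s t : ℝ, 0 ≤ s → s ≤ t →
    Measure.map (fun ω => B t ω - B s ω) P = gaussianReal 0 (t - s).toNNReal) ∧
  (∀ (n : ℕ) (t : Fin (n + 1) → ℝ), (∀ i, 0 ≤ t i) → Monotone t →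
    iIndepFun
      (fun i : Fin n => fun ω => B (t i.succ) ω - B (t i.castSucc) ω) P)

/-- The sojourn set `E_γ = {t ≥ 0 : |B_t| ≤ t^γ}` of the path `B · ω`. -/
def sojournSet (B : ℝ → ℝ) (γ : ℝ) : Set ℝ :=
  {t : ℝ | 0 ≤ t ∧ |B t| ≤ t ^ γ}

/-- The sojourn time `M(t) = |{0 < s < t : |B_s| ≤ s^γ}|` (Lebesgue measure). -/
def sojournTime (B : ℝ → ℝ) (γ : ℝ) (t : ℝ) : ℝ≥0∞ :=
  volume {s : ℝ | 0 < s ∧ s < t ∧ |B s| ≤ s ^ γ}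


section AuxiliaryLemmas

open Real

lemma measurable_rpow_const' (c : ℝ) : Measurable fun x : ℝ => x ^ c := by
  have h : (fun x : ℝ => x ^ c) = fun x =>
      if x = 0 then (if c = 0 then 1 else 0)
      else Real.exp (Real.log x * c) * (if x < 0 then Real.cos (c * π) else 1) := by
    funext x
    rcases lt_trichotomy x 0 with hx | hx | hx
    · rw [Real.rpow_def_of_neg hx]
      simp [hx.ne, hx, mul_comm c π]
    · subst hx
      by_cases hc : c = 0 <;> simp [hc, Real.zero_rpow]
    · rw [Real.rpow_def_of_pos hx]
      simp [hx.ne', not_lt.mpr hx.le]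
  rw [h]
  refine Measurable.ite (measurableSet_eq) measurable_const ?_
  exact (Real.measurable_exp.comp (Real.measurable_log.mul_const c)).mul
    (Measurable.ite (measurableSet_lt measurable_id measurable_const)
      measurable_const measurable_const)

lemma lintegral_rpow_Ioc {r : ℝ} (hr : -1 < r) {c : ℝ} (hc : 0 ≤ c) :
    ∫⁻ s in Set.Ioc 0 c, ENNReal.ofReal (s ^ r) = ENNReal.ofReal (c ^ (r + 1) / (r + 1)) := by
  have hint : IntegrableOn (fun s : ℝ => s ^ r) (Set.Ioc 0 c) := by
    have := intervalIntegral.intervalIntegrable_rpow' (a := 0) (b := c) hr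
    rwa [intervalIntegrable_iff, uIoc_of_le hc] at this
  rw [← MeasureTheory.ofReal_integral_eq_lintegral_ofReal hint ?_]
  · congr 1
    rw [← intervalIntegral.integral_of_le hc, integral_rpow (Or.inl hr),
      Real.zero_rpow (by linarith : r + 1 ≠ 0), sub_zero]
  · filter_upwards [ae_restrict_mem measurableSet_Ioc] with s hs
    exact Real.rpow_nonneg hs.1.le r

lemma lintegral_rpow_sub {u : ℝ} (hu : 0 < u) :
    ∫⁻ s in Set.Ioc (u / 2) u, ENNReal.ofReal ((u - s) ^ (-(1/2) : ℝ)) =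
      ENNReal.ofReal (2 * (u / 2) ^ ((1:ℝ)/2)) := by
  have hint : IntegrableOn (fun s : ℝ => (u - s) ^ (-(1/2) : ℝ)) (Set.Ioc (u / 2) u) := by
    have h0 : IntervalIntegrable (fun x : ℝ => x ^ (-(1/2) : ℝ)) volume 0 (u / 2) :=
      intervalIntegral.intervalIntegrable_rpow' (by norm_num)
    have h1 := (h0.comp_sub_left u).symm
    rw [intervalIntegrable_iff] at h1
    have e0 : u - 0 = u := by ring
    have e1 : u - u / 2 = u / 2 := by ring
    rw [e0, e1, uIoc_of_le (by linarith : u / 2 ≤ u)] at h1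
    exact h1
  rw [← MeasureTheory.ofReal_integral_eq_lintegral_ofReal hint ?_]
  · congr 1
    rw [← intervalIntegral.integral_of_le (by linarith : u / 2 ≤ u),
      intervalIntegral.integral_comp_sub_left (fun x : ℝ => x ^ (-(1/2) : ℝ)) u,
      sub_self, (by ring : u - u / 2 = u / 2), integral_rpow (Or.inl (by norm_num)),
      Real.zero_rpow (by norm_num : (-(1/2) : ℝ) + 1 ≠ 0), sub_zero,
      (by norm_num : (-(1/2) : ℝ) + 1 = 1/2)]
    ring
  · filter_upwards [ae_restrict_mem measurableSet_Ioc] with s hs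
    exact Real.rpow_nonneg (by linarith [hs.2]) _


lemma gauss_abs_le {Ω : Type*} [MeasurableSpace Ω] (P : Measure Ω) [IsProbabilityMeasure P]
    {X : Ω → ℝ} (hX : Measurable X)
    {v : ℝ≥0} (hv : 0 < (v : ℝ)) (hmap : Measure.map X P = gaussianReal 0 v)
    {a : ℝ} (ha : 0 ≤ a) :
    P {ω | |X ω| ≤ a} ≤ ENNReal.ofReal (a / Real.sqrt v) := by
  have hset : {ω | |X ω| ≤ a} = X ⁻¹' Set.Icc (-a) a := by
    ext ω; simp [abs_le]
  have hv' : v ≠ 0 := by exact_mod_cast hv.ne'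
  rw [hset, ← Measure.map_apply hX measurableSet_Icc, hmap, gaussianReal_apply 0 hv']
  have hsv : 0 < Real.sqrt v := Real.sqrt_pos.mpr hv
  have h2π : (2:ℝ) ≤ Real.sqrt (2 * π) := by
    have h4 : Real.sqrt 4 ≤ Real.sqrt (2 * π) :=
      Real.sqrt_le_sqrt (by nlinarith [Real.pi_gt_three])
    have : Real.sqrt 4 = 2 := by
      rw [show (4:ℝ) = 2 ^ 2 by norm_num, Real.sqrt_sq (by norm_num : (0:ℝ) ≤ 2)]
    linarith
  calc ∫⁻ x in Set.Icc (-a) a, gaussianPDF 0 v x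
      ≤ ∫⁻ _ in Set.Icc (-a) a, ENNReal.ofReal ((Real.sqrt (2 * π * v))⁻¹) := by
        refine lintegral_mono fun x => ?_
        refine ENNReal.ofReal_le_ofReal ?_
        rw [gaussianPDFReal]
        refine mul_le_of_le_one_right (by positivity) ?_
        refine Real.exp_le_one_iff.mpr ?_
        have : (0:ℝ) ≤ (x - 0) ^ 2 := sq_nonneg _
        have h2v : (0:ℝ) < 2 * v := by linarith
        exact div_nonpos_iff.mpr (Or.inr ⟨by linarith, h2v.le⟩)
    _ = ENNReal.ofReal ((Real.sqrt (2 * π * v))⁻¹) * volume (Set.Icc (-a) a) :=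
        setLIntegral_const _ _
    _ = ENNReal.ofReal ((Real.sqrt (2 * π * v))⁻¹) * ENNReal.ofReal (2 * a) := by
        rw [Real.volume_Icc]; congr 1; ring
    _ = ENNReal.ofReal ((Real.sqrt (2 * π * v))⁻¹ * (2 * a)) :=
        (ENNReal.ofReal_mul (by positivity)).symm
    _ ≤ ENNReal.ofReal (a / Real.sqrt v) := by
        refine ENNReal.ofReal_le_ofReal ?_
        have hsplit : Real.sqrt (2 * π * v) = Real.sqrt (2 * π) * Real.sqrt v := by
          rw [← Real.sqrt_mul (by positivity)]
        rw [inv_mul_eq_div, hsplit]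
        calc 2 * a / (Real.sqrt (2 * π) * Real.sqrt v) ≤ 2 * a / (2 * Real.sqrt v) := by
              apply div_le_div_of_nonneg_left ?_ (by positivity) ?_
              · linarith
              · exact mul_le_mul_of_nonneg_right h2π hsv.le
          _ = a / Real.sqrt v := by
              rw [div_eq_div_iff (by positivity : (2 * Real.sqrt v) ≠ 0) hsv.ne']; ring


def hfun (γ : ℝ) (s u : ℝ) : ℝ≥0∞ :=
  ENNReal.ofReal (s ^ (γ - 1/2)) *
    min 1 (ENNReal.ofReal (2 * u ^ γ * (u - s) ^ (-(1/2) : ℝ)))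

lemma hfun_measurable (γ : ℝ) : Measurable (Function.uncurry (hfun γ)) := by
  show Measurable ((fun p : ℝ × ℝ => ENNReal.ofReal (p.1 ^ (γ - 1/2))) *
    fun p : ℝ × ℝ => min 1 (ENNReal.ofReal (2 * p.2 ^ γ * (p.2 - p.1) ^ (-(1/2) : ℝ))))
  apply Measurable.mul
  · exact ENNReal.measurable_ofReal.comp ((measurable_rpow_const' _).comp measurable_fst)
  · refine Measurable.min measurable_const ?_
    refine ENNReal.measurable_ofReal.comp ?_
    exact (measurable_const.mul ((measurable_rpow_const' γ).comp measurable_snd)).mul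
      ((measurable_rpow_const' _).comp (measurable_snd.sub measurable_fst))

lemma hfun_zero {γ s u : ℝ} (h : u ≤ s) : hfun γ s u = 0 := by
  have hz : (u - s) ^ (-(1/2) : ℝ) = 0 := by
    rcases eq_or_lt_of_le h with he | hlt
    · rw [he, sub_self, Real.zero_rpow (by norm_num)]
    · rw [Real.rpow_def_of_neg (by linarith : u - s < 0)]
      have : Real.cos (-(1/2) * π) = 0 := by
        rw [show (-(1/2) : ℝ) * π = -(π / 2) by ring, Real.cos_neg, Real.cos_pi_div_two]
      rw [this, mul_zero]
  unfold hfun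
  rw [hz, mul_zero, ENNReal.ofReal_zero, min_eq_right (zero_le_one), mul_zero]

lemma K_bound (γ : ℝ) (hγ0 : 0 ≤ γ) (hγ : γ < 1/2) {u : ℝ} (hu : 0 < u) (t : ℝ) :
    ∫⁻ s in Set.Ioo 0 t, hfun γ s u ≤ ENNReal.ofReal (8 * u ^ (2 * γ)) := by
  have hu2 : (0:ℝ) < u / 2 := by linarith
  have huγ : (0:ℝ) ≤ u ^ γ := Real.rpow_nonneg hu.le γ
  have hu2γ : (u / 2) ^ γ ≤ u ^ γ := Real.rpow_le_rpow hu2.le (by linarith) hγ0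
  have hu2γ0 : (0:ℝ) ≤ (u / 2) ^ γ := Real.rpow_nonneg hu2.le γ
  have h2γ : u ^ γ * u ^ γ = u ^ (2 * γ) := by
    rw [← Real.rpow_add hu]; ring_nf
  -- reduce to Ioi 0
  refine (lintegral_mono_set Set.Ioo_subset_Ioi_self).trans ?_
  have hsplit1 : Set.Ioi (0:ℝ) = Set.Ioc 0 (u / 2) ∪ Set.Ioi (u / 2) :=
    (Set.Ioc_union_Ioi_eq_Ioi hu2.le).symm
  have hsplit2 : Set.Ioi (u / 2) = Set.Ioc (u / 2) u ∪ Set.Ioi u :=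
    (Set.Ioc_union_Ioi_eq_Ioi (by linarith : u / 2 ≤ u)).symm
  rw [hsplit1, lintegral_union measurableSet_Ioi
    (Set.Ioc_disjoint_Ioi le_rfl), hsplit2, lintegral_union measurableSet_Ioi
    (Set.Ioc_disjoint_Ioi le_rfl)]
  -- third piece is zero
  have h3 : ∫⁻ s in Set.Ioi u, hfun γ s u = 0 := by
    rw [setLIntegral_congr_fun measurableSet_Ioi
      (fun s hs => hfun_zero (le_of_lt hs))]
    simp
  -- first piece
  have h1 : ∫⁻ s in Set.Ioc 0 (u / 2), hfun γ s u ≤ ENNReal.ofReal (4 * u ^ (2 * γ)) := by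
    have hb : ∀ s ∈ Set.Ioc 0 (u / 2), hfun γ s u ≤
        ENNReal.ofReal (s ^ (γ - 1/2)) * ENNReal.ofReal (2 * u ^ γ * (u / 2) ^ (-(1/2) : ℝ)) := by
      intro s hs
      refine mul_le_mul' le_rfl ((min_le_right _ _).trans (ENNReal.ofReal_le_ofReal ?_))
      refine mul_le_mul_of_nonneg_left ?_ (by positivity)
      exact Real.rpow_le_rpow_of_nonpos hu2 (by linarith [hs.2] : u / 2 ≤ u - s) (by norm_num)
    calc ∫⁻ s in Set.Ioc 0 (u / 2), hfun γ s u
        ≤ ∫⁻ s in Set.Ioc 0 (u / 2),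
            ENNReal.ofReal (s ^ (γ - 1/2)) * ENNReal.ofReal (2 * u ^ γ * (u / 2) ^ (-(1/2) : ℝ)) := by
          refine lintegral_mono_ae ?_
          filter_upwards [ae_restrict_mem measurableSet_Ioc] with s hs using hb s hs
      _ = (∫⁻ s in Set.Ioc 0 (u / 2), ENNReal.ofReal (s ^ (γ - 1/2))) *
            ENNReal.ofReal (2 * u ^ γ * (u / 2) ^ (-(1/2) : ℝ)) :=
          lintegral_mul_const' _ _ ENNReal.ofReal_ne_top
      _ = ENNReal.ofReal ((u / 2) ^ (γ + 1/2) / (γ + 1/2)) *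
            ENNReal.ofReal (2 * u ^ γ * (u / 2) ^ (-(1/2) : ℝ)) := by
          rw [lintegral_rpow_Ioc (by linarith) hu2.le,
            (by ring : γ - 1/2 + 1 = γ + 1/2)]
      _ = ENNReal.ofReal ((u / 2) ^ (γ + 1/2) / (γ + 1/2) * (2 * u ^ γ * (u / 2) ^ (-(1/2) : ℝ))) := by
          rw [← ENNReal.ofReal_mul
            (div_nonneg (Real.rpow_nonneg hu2.le _) (by linarith : (0:ℝ) ≤ γ + 1/2))]
      _ ≤ ENNReal.ofReal (4 * u ^ (2 * γ)) := by
          refine ENNReal.ofReal_le_ofReal ?_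
          have e1 : (u / 2) ^ (γ + 1/2) * (u / 2) ^ (-(1/2) : ℝ) = (u / 2) ^ γ := by
            rw [← Real.rpow_add hu2]; ring_nf
          have hden : (0:ℝ) < γ + 1/2 := by linarith
          have hinv : 1 / (γ + 1/2) ≤ 2 := by
            rw [div_le_iff₀ hden]; linarith
          calc (u / 2) ^ (γ + 1/2) / (γ + 1/2) * (2 * u ^ γ * (u / 2) ^ (-(1/2) : ℝ))
              = 2 * u ^ γ * ((u / 2) ^ (γ + 1/2) * (u / 2) ^ (-(1/2) : ℝ)) * (1 / (γ + 1/2)) := by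
                ring
            _ = 2 * u ^ γ * (u / 2) ^ γ * (1 / (γ + 1/2)) := by rw [e1]
            _ ≤ 2 * u ^ γ * u ^ γ * 2 := by
                have h1' : 2 * u ^ γ * (u / 2) ^ γ ≤ 2 * u ^ γ * u ^ γ := by nlinarith
                have h2' : (0:ℝ) ≤ 2 * u ^ γ * (u / 2) ^ γ := by positivity
                nlinarith
            _ = 4 * u ^ (2 * γ) := by rw [mul_comm (2 * u ^ γ * u ^ γ) 2, ← mul_assoc]; nlinarith [h2γ]
  -- second piece
  have h2 : ∫⁻ s in Set.Ioc (u / 2) u, hfun γ s u ≤ ENNReal.ofReal (4 * u ^ (2 * γ)) := by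
    have hb : ∀ s ∈ Set.Ioc (u / 2) u, hfun γ s u ≤
        ENNReal.ofReal ((u / 2) ^ (γ - 1/2) * (2 * u ^ γ)) *
          ENNReal.ofReal ((u - s) ^ (-(1/2) : ℝ)) := by
      intro s hs
      have hs' : s ^ (γ - 1/2) ≤ (u / 2) ^ (γ - 1/2) :=
        Real.rpow_le_rpow_of_nonpos hu2 hs.1.le (by linarith)
      have husr : (0:ℝ) ≤ (u - s) ^ (-(1/2) : ℝ) := Real.rpow_nonneg (by linarith [hs.2]) _
      calc hfun γ s u ≤ ENNReal.ofReal (s ^ (γ - 1/2)) *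
            ENNReal.ofReal (2 * u ^ γ * (u - s) ^ (-(1/2) : ℝ)) :=
            mul_le_mul' le_rfl (min_le_right _ _)
        _ = ENNReal.ofReal (s ^ (γ - 1/2) * (2 * u ^ γ * (u - s) ^ (-(1/2) : ℝ))) := by
            rw [← ENNReal.ofReal_mul (Real.rpow_nonneg (by linarith [hs.1] : (0:ℝ) ≤ s) _)]
        _ ≤ ENNReal.ofReal ((u / 2) ^ (γ - 1/2) * (2 * u ^ γ) * (u - s) ^ (-(1/2) : ℝ)) := by
            refine ENNReal.ofReal_le_ofReal ?_
            have : s ^ (γ - 1/2) * (2 * u ^ γ * (u - s) ^ (-(1/2) : ℝ)) =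
                s ^ (γ - 1/2) * (2 * u ^ γ) * (u - s) ^ (-(1/2) : ℝ) := by ring
            rw [this]
            refine mul_le_mul_of_nonneg_right (mul_le_mul_of_nonneg_right hs' (by positivity)) husr
        _ = _ := ENNReal.ofReal_mul (by positivity)
    calc ∫⁻ s in Set.Ioc (u / 2) u, hfun γ s u
        ≤ ∫⁻ s in Set.Ioc (u / 2) u, ENNReal.ofReal ((u / 2) ^ (γ - 1/2) * (2 * u ^ γ)) *
            ENNReal.ofReal ((u - s) ^ (-(1/2) : ℝ)) := by
          refine lintegral_mono_ae ?_
          filter_upwards [ae_restrict_mem measurableSet_Ioc] with s hs using hb s hs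
      _ = ENNReal.ofReal ((u / 2) ^ (γ - 1/2) * (2 * u ^ γ)) *
            ∫⁻ s in Set.Ioc (u / 2) u, ENNReal.ofReal ((u - s) ^ (-(1/2) : ℝ)) :=
          lintegral_const_mul' _ _ ENNReal.ofReal_ne_top
      _ = ENNReal.ofReal ((u / 2) ^ (γ - 1/2) * (2 * u ^ γ)) *
            ENNReal.ofReal (2 * (u / 2) ^ ((1:ℝ)/2)) := by rw [lintegral_rpow_sub hu]
      _ = ENNReal.ofReal ((u / 2) ^ (γ - 1/2) * (2 * u ^ γ) * (2 * (u / 2) ^ ((1:ℝ)/2))) :=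
          (ENNReal.ofReal_mul (by positivity)).symm
      _ ≤ ENNReal.ofReal (4 * u ^ (2 * γ)) := by
          refine ENNReal.ofReal_le_ofReal ?_
          have e1 : (u / 2) ^ (γ - 1/2) * (u / 2) ^ ((1:ℝ)/2) = (u / 2) ^ γ := by
            rw [← Real.rpow_add hu2]; ring_nf
          calc (u / 2) ^ (γ - 1/2) * (2 * u ^ γ) * (2 * (u / 2) ^ ((1:ℝ)/2))
              = 4 * u ^ γ * ((u / 2) ^ (γ - 1/2) * (u / 2) ^ ((1:ℝ)/2)) := by ring
            _ = 4 * u ^ γ * (u / 2) ^ γ := by rw [e1]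
            _ ≤ 4 * u ^ γ * u ^ γ := by nlinarith
            _ = 4 * u ^ (2 * γ) := by rw [mul_assoc, h2γ]
  refine (add_le_add h1 (add_le_add h2 h3.le)).trans ?_
  rw [add_zero, ← ENNReal.ofReal_add (by positivity) (by positivity)]
  exact ENNReal.ofReal_le_ofReal (by linarith)


lemma key_bound {Ω : Type*} [MeasurableSpace Ω] (P : Measure Ω) (B : ℝ → Ω → ℝ)
    (hB : IsStandardBrownianMotion P B)
    (γ : ℝ) (hγ0 : 0 ≤ γ) {s u : ℝ} (hs : 0 < s) (hsu : s < u) :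
    P ({ω | |B s ω| ≤ s ^ γ} ∩ {ω | |B u ω| ≤ u ^ γ}) ≤
      ENNReal.ofReal (s ^ (γ - 1/2)) *
        min 1 (ENNReal.ofReal (2 * u ^ γ * (u - s) ^ (-(1/2) : ℝ))) := by
  obtain ⟨hP, hmeas, hzero, hcont, hgauss, hindep⟩ := hB
  haveI := hP
  have hu : 0 < u := hs.trans hsu
  set X : Ω → ℝ := fun ω => B s ω - B 0 ω with hX
  set Y : Ω → ℝ := fun ω => B u ω - B s ω with hY
  have hXm : Measurable X := (hmeas s).sub (hmeas 0)
  have hYm : Measurable Y := (hmeas u).sub (hmeas s)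
  have hXB : ∀ ω, X ω = B s ω := fun ω => by rw [hX]; simp [hzero ω]
  -- independence of X and Y
  have hmono : Monotone ![0, s, u] := by
    rw [Fin.monotone_iff_le_succ]
    intro i
    fin_cases i <;> simp [hs.le, hsu.le]
  have hfam := hindep 2 ![0, s, u] (fun i => by fin_cases i <;> simp [hs.le, hu.le]) hmono
  have hXY : IndepFun X Y P := by
    have h01 := hfam.indepFun (i := 0) (j := 1) (by decide)
    have e0 : (fun ω => B (![0, s, u] (Fin.succ 0)) ω - B (![0, s, u] (Fin.castSucc 0)) ω) = X := by
      funext ω; simp [hX]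
    have e1 : (fun ω => B (![0, s, u] (Fin.succ 1)) ω - B (![0, s, u] (Fin.castSucc 1)) ω) = Y := by
      funext ω; simp [hY]
    rwa [e0, e1] at h01
  -- inclusion into a product event
  have hsγ : (0:ℝ) ≤ s ^ γ := Real.rpow_nonneg hs.le γ
  have huγ : (0:ℝ) ≤ u ^ γ := Real.rpow_nonneg hu.le γ
  have hsub : {ω | |B s ω| ≤ s ^ γ} ∩ {ω | |B u ω| ≤ u ^ γ} ⊆
      (X ⁻¹' {x | |x| ≤ s ^ γ}) ∩ (Y ⁻¹' {x | |x| ≤ 2 * u ^ γ}) := by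
    rintro ω ⟨h1, h2⟩
    have hle : s ^ γ ≤ u ^ γ := Real.rpow_le_rpow hs.le hsu.le hγ0
    refine ⟨?_, ?_⟩
    · simpa [hXB ω] using h1
    · have htri : |B u ω - B s ω| ≤ |B u ω| + |B s ω| := abs_sub _ _
      simp only [Set.mem_setOf_eq, Set.mem_preimage, hY]
      simp only [Set.mem_setOf_eq] at h1 h2
      linarith
  refine (measure_mono hsub).trans ?_
  have hs1 : MeasurableSet {x : ℝ | |x| ≤ s ^ γ} := by
    have : {x : ℝ | |x| ≤ s ^ γ} = Set.Icc (-(s ^ γ)) (s ^ γ) := by ext x; simp [abs_le]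
    rw [this]; exact measurableSet_Icc
  have hs2 : MeasurableSet {x : ℝ | |x| ≤ 2 * u ^ γ} := by
    have : {x : ℝ | |x| ≤ 2 * u ^ γ} = Set.Icc (-(2 * u ^ γ)) (2 * u ^ γ) := by ext x; simp [abs_le]
    rw [this]; exact measurableSet_Icc
  rw [hXY.measure_inter_preimage_eq_mul _ _ hs1 hs2]
  have hmapX : Measure.map X P = gaussianReal 0 s.toNNReal := by
    have := hgauss 0 s le_rfl hs.le
    simpa [hX] using this
  have hmapY : Measure.map Y P = gaussianReal 0 (u - s).toNNReal := by
    exact hgauss s u hs.le hsu.le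
  have hcoeS : ((s.toNNReal : ℝ)) = s := Real.coe_toNNReal s hs.le
  have hcoeUS : (((u - s).toNNReal : ℝ)) = u - s := Real.coe_toNNReal _ (by linarith)
  have hPX : P (X ⁻¹' {x | |x| ≤ s ^ γ}) ≤ ENNReal.ofReal (s ^ (γ - 1/2)) := by
    have h := gauss_abs_le P hXm (v := s.toNNReal) (by rw [hcoeS]; exact hs) hmapX hsγ
    refine h.trans (le_of_eq ?_)
    congr 1
    rw [hcoeS, Real.sqrt_eq_rpow, div_eq_mul_inv, ← Real.rpow_neg hs.le, ← Real.rpow_add hs,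
      sub_eq_add_neg]
  have hPY : P (Y ⁻¹' {x | |x| ≤ 2 * u ^ γ}) ≤
      min 1 (ENNReal.ofReal (2 * u ^ γ * (u - s) ^ (-(1/2) : ℝ))) := by
    refine le_min prob_le_one ?_
    have h := gauss_abs_le P hYm (v := (u - s).toNNReal)
      (by rw [hcoeUS]; linarith) hmapY (by positivity : (0:ℝ) ≤ 2 * u ^ γ)
    refine h.trans (le_of_eq ?_)
    congr 1
    rw [hcoeUS, Real.sqrt_eq_rpow, div_eq_mul_inv, ← Real.rpow_neg (by linarith : (0:ℝ) ≤ u - s)]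
  exact mul_le_mul' hPX hPY


end AuxiliaryLemmas

/-- second-moment bound `E[M(t)²] ≤ C t^{2γ+1}`; in particular
`limsup_{t→∞} E[(M(t) t^{−(γ+1/2)})²] < ∞`. -/
theorem expected_sojournTime_sq_bound {Ω : Type*} [MeasurableSpace Ω] (P : Measure Ω)
    (B : ℝ → Ω → ℝ) (hB : IsStandardBrownianMotion P B)
    (γ : ℝ) (hγ0 : 0 ≤ γ) (hγ : γ < 1 / 2) :
    (∃ C : ℝ, 0 < C ∧ ∀ t : ℝ, 1 ≤ t →
      ∫⁻ ω, (sojournTime (fun s => B s ω) γ t) ^ 2 ∂P ≤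
        ENNReal.ofReal (C * t ^ (2 * γ + 1))) ∧
    Filter.limsup
      (fun t : ℝ =>
        ∫⁻ ω, (sojournTime (fun s => B s ω) γ t * ENNReal.ofReal (t ^ (-(γ + 1 / 2)))) ^ 2 ∂P)
      Filter.atTop < ⊤ := by
  haveI : IsProbabilityMeasure P := hB.1
  -- joint measurability of the (stopped) process
  have hjoint : Measurable (Function.uncurry fun (s : ℝ) (ω : Ω) => B (max s 0) ω) := by
    apply measurable_uncurry_of_continuous_of_measurable
    · intro ω
      exact (hB.2.2.2.1 ω).comp_continuous (continuous_id.max continuous_const)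
        (fun s => Set.mem_Ici.mpr (le_max_right _ _))
    · intro s; exact hB.2.1 _
  have main : ∀ t : ℝ, 0 < t →
      ∫⁻ ω, (sojournTime (fun s => B s ω) γ t) ^ 2 ∂P ≤
        ENNReal.ofReal (16 * t ^ (2 * γ + 1)) := by
    intro t ht
    set D : Set (ℝ × Ω) := {p | 0 < p.1 ∧ p.1 < t ∧ |B (max p.1 0) p.2| ≤ p.1 ^ γ} with hD
    have hDm : MeasurableSet D := by
      have h1 : Measurable fun p : ℝ × Ω => B (max p.1 0) p.2 := hjoint
      have e : D = (Prod.fst ⁻¹' Set.Ioi (0:ℝ)) ∩ ((Prod.fst ⁻¹' Set.Iio t) ∩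
          {p : ℝ × Ω | |B (max p.1 0) p.2| ≤ p.1 ^ γ}) := by
        ext p; simp [hD, Set.mem_setOf_eq, and_assoc]
      rw [e]
      exact (measurable_fst measurableSet_Ioi).inter
        ((measurable_fst measurableSet_Iio).inter
          (measurableSet_le h1.abs ((measurable_rpow_const' γ).comp measurable_fst)))
    have hsec : ∀ ω, sojournTime (fun s => B s ω) γ t = volume {s | (s, ω) ∈ D} := by
      intro ω
      unfold sojournTime
      congr 1
      ext s
      simp only [hD, Set.mem_setOf_eq]
      constructor
      · rintro ⟨h1, h2, h3⟩; exact ⟨h1, h2, by rwa [max_eq_left h1.le]⟩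
      · rintro ⟨h1, h2, h3⟩; exact ⟨h1, h2, by rwa [max_eq_left h1.le] at h3⟩
    set S : Set ((ℝ × ℝ) × Ω) := {q | (q.1.1, q.2) ∈ D ∧ (q.1.2, q.2) ∈ D} with hS
    have hSm : MeasurableSet S := by
      have e1 : Measurable fun q : (ℝ × ℝ) × Ω => (q.1.1, q.2) :=
        (measurable_fst.fst).prodMk measurable_snd
      have e2 : Measurable fun q : (ℝ × ℝ) × Ω => (q.1.2, q.2) :=
        (measurable_fst.snd).prodMk measurable_snd
      exact (e1 hDm).inter (e2 hDm)
    have hsq : ∀ ω, (sojournTime (fun s => B s ω) γ t) ^ 2 =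
        (volume.prod volume) ((fun p : ℝ × ℝ => (p, ω)) ⁻¹' S) := by
      intro ω
      have e : (fun p : ℝ × ℝ => (p, ω)) ⁻¹' S = {s | (s, ω) ∈ D} ×ˢ {s | (s, ω) ∈ D} := by
        ext p; simp [hS, Set.mem_prod]
      rw [e, Measure.prod_prod, hsec, sq]
    -- Tonelli
    have hE : ∫⁻ ω, (sojournTime (fun s => B s ω) γ t) ^ 2 ∂P =
        ∫⁻ p : ℝ × ℝ, P (Prod.mk p ⁻¹' S) ∂(volume.prod volume) := by
      calc ∫⁻ ω, (sojournTime (fun s => B s ω) γ t) ^ 2 ∂P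
          = ∫⁻ ω, (volume.prod volume) ((fun p : ℝ × ℝ => (p, ω)) ⁻¹' S) ∂P :=
            lintegral_congr fun ω => hsq ω
        _ = ((volume.prod volume).prod P) S := (Measure.prod_apply_symm hSm).symm
        _ = ∫⁻ p : ℝ × ℝ, P (Prod.mk p ⁻¹' S) ∂(volume.prod volume) := Measure.prod_apply hSm
    set g : ℝ → ℝ → ℝ≥0∞ := fun s u => P {ω | (s, ω) ∈ D ∧ (u, ω) ∈ D} with hg
    have hgm : Measurable fun p : ℝ × ℝ => g p.1 p.2 := by
      have := measurable_measure_prodMk_left (ν := P) hSm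
      exact this
    have hE2 : ∫⁻ p : ℝ × ℝ, P (Prod.mk p ⁻¹' S) ∂(volume.prod volume) =
        ∫⁻ s, ∫⁻ u, g s u :=
      lintegral_prod (fun z : ℝ × ℝ => g z.1 z.2) hgm.aemeasurable
    -- restrict to the box
    have hg_zero_left : ∀ s u, s ∉ Set.Ioo 0 t → g s u = 0 := by
      intro s u hs
      have e : {ω : Ω | (s, ω) ∈ D ∧ (u, ω) ∈ D} = ∅ := by
        ext ω
        constructor
        · rintro ⟨⟨h1, h2, _⟩, _⟩; exact hs ⟨h1, h2⟩
        · exact fun h => h.elim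
      show P {ω : Ω | (s, ω) ∈ D ∧ (u, ω) ∈ D} = 0
      rw [e]
      exact measure_empty
    have hg_zero_right : ∀ s u, u ∉ Set.Ioo 0 t → g s u = 0 := by
      intro s u hu
      have e : {ω : Ω | (s, ω) ∈ D ∧ (u, ω) ∈ D} = ∅ := by
        ext ω
        constructor
        · rintro ⟨_, ⟨h1, h2, _⟩⟩; exact hu ⟨h1, h2⟩
        · exact fun h => h.elim
      show P {ω : Ω | (s, ω) ∈ D ∧ (u, ω) ∈ D} = 0
      rw [e]
      exact measure_empty
    have hrestr : ∫⁻ s, ∫⁻ u, g s u = ∫⁻ s in Set.Ioo 0 t, ∫⁻ u in Set.Ioo 0 t, g s u := by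
      have e1 : ∀ s, ∫⁻ u, g s u = ∫⁻ u in Set.Ioo 0 t, g s u := by
        intro s
        rw [← lintegral_indicator measurableSet_Ioo]
        refine lintegral_congr fun u => ?_
        by_cases hu : u ∈ Set.Ioo 0 t
        · rw [Set.indicator_of_mem hu]
        · rw [Set.indicator_of_notMem hu, hg_zero_right s u hu]
      calc ∫⁻ s, ∫⁻ u, g s u = ∫⁻ s, (Set.Ioo 0 t).indicator (fun s => ∫⁻ u in Set.Ioo 0 t, g s u) s := by
            refine lintegral_congr fun s => ?_
            by_cases hs : s ∈ Set.Ioo 0 t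
            · rw [Set.indicator_of_mem hs, e1]
            · rw [Set.indicator_of_notMem hs, e1 s]
              have hz : ∀ u, g s u = 0 := fun u => hg_zero_left s u hs
              simp [hz]
        _ = ∫⁻ s in Set.Ioo 0 t, ∫⁻ u in Set.Ioo 0 t, g s u := lintegral_indicator measurableSet_Ioo _
    -- event identification
    have hA : ∀ s ∈ Set.Ioo 0 t, ∀ u ∈ Set.Ioo 0 t,
        {ω | (s, ω) ∈ D ∧ (u, ω) ∈ D} =
          {ω | |B s ω| ≤ s ^ γ} ∩ {ω | |B u ω| ≤ u ^ γ} := by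
      intro s hs u hu
      ext ω
      simp only [hD, Set.mem_setOf_eq, Set.mem_inter_iff]
      rw [max_eq_left hs.1.le, max_eq_left hu.1.le]
      constructor
      · rintro ⟨⟨_, _, h1⟩, ⟨_, _, h2⟩⟩; exact ⟨h1, h2⟩
      · rintro ⟨h1, h2⟩; exact ⟨⟨hs.1, hs.2, h1⟩, ⟨hu.1, hu.2, h2⟩⟩
    -- pointwise bound
    have hbound : ∀ s ∈ Set.Ioo 0 t, ∀ u ∈ Set.Ioo 0 t, u ≠ s →
        g s u ≤ hfun γ s u + hfun γ u s := by
      intro s hs u hu hne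
      have hgeq : g s u = P ({ω | |B s ω| ≤ s ^ γ} ∩ {ω | |B u ω| ≤ u ^ γ}) := by
        rw [hg]; exact congrArg P (hA s hs u hu)
      rw [hgeq]
      rcases lt_or_gt_of_ne hne with hlt | hgt
      · rw [Set.inter_comm]
        exact le_trans (key_bound P B hB γ hγ0 hu.1 hlt) le_add_self
      · exact le_trans (key_bound P B hB γ hγ0 hs.1 hgt) le_self_add
    -- inner integral bound
    have hinner : ∀ s ∈ Set.Ioo 0 t,
        ∫⁻ u in Set.Ioo 0 t, g s u ≤
          (∫⁻ u in Set.Ioo 0 t, hfun γ s u) + ENNReal.ofReal (8 * s ^ (2 * γ)) := by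
      intro s hs
      have h1 : ∫⁻ u in Set.Ioo 0 t, g s u ≤
          ∫⁻ u in Set.Ioo 0 t, (hfun γ s u + hfun γ u s) := by
        refine lintegral_mono_ae ?_
        have hne : ∀ᵐ u : ℝ ∂(volume.restrict (Set.Ioo 0 t)), u ≠ s := by
          refine ae_restrict_of_ae ?_
          have e : {u : ℝ | ¬ u ≠ s} = {s} := by ext x; simp
          rw [ae_iff, e]
          exact measure_singleton s
        filter_upwards [ae_restrict_mem measurableSet_Ioo, hne] with u hu hus
        exact hbound s hs u hu hus
      refine h1.trans ?_
      rw [lintegral_add_left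
        (show Measurable fun u => hfun γ s u from
          (hfun_measurable γ).comp measurable_prodMk_left)]
      exact add_le_add le_rfl (K_bound γ hγ0 hγ hs.1 t)
    -- common integral bound
    have hIioo : ∫⁻ s in Set.Ioo 0 t, ENNReal.ofReal (8 * s ^ (2 * γ)) ≤
        ENNReal.ofReal (8 * t ^ (2 * γ + 1)) := by
      refine (lintegral_mono_set Set.Ioo_subset_Ioc_self).trans ?_
      have e : ∀ s : ℝ, ENNReal.ofReal (8 * s ^ (2 * γ)) =
          ENNReal.ofReal 8 * ENNReal.ofReal (s ^ (2 * γ)) :=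
        fun s => ENNReal.ofReal_mul (by norm_num)
      simp_rw [e]
      rw [lintegral_const_mul' _ _ ENNReal.ofReal_ne_top,
        lintegral_rpow_Ioc (by linarith : (-1:ℝ) < 2 * γ) ht.le,
        ← ENNReal.ofReal_mul (by norm_num)]
      refine ENNReal.ofReal_le_ofReal ?_
      have htr : (0:ℝ) ≤ t ^ (2 * γ + 1) := Real.rpow_nonneg ht.le _
      have hd : t ^ (2 * γ + 1) / (2 * γ + 1) ≤ t ^ (2 * γ + 1) :=
        div_le_self htr (by linarith)
      linarith
    -- first term via swap
    have hswap : ∫⁻ s in Set.Ioo 0 t, ∫⁻ u in Set.Ioo 0 t, hfun γ s u =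
        ∫⁻ u in Set.Ioo 0 t, ∫⁻ s in Set.Ioo 0 t, hfun γ s u :=
      lintegral_lintegral_swap ((hfun_measurable γ).aemeasurable)
    have hT1 : ∫⁻ s in Set.Ioo 0 t, ∫⁻ u in Set.Ioo 0 t, hfun γ s u ≤
        ENNReal.ofReal (8 * t ^ (2 * γ + 1)) := by
      rw [hswap]
      refine le_trans ?_ hIioo
      refine lintegral_mono_ae ?_
      filter_upwards [ae_restrict_mem measurableSet_Ioo] with u hu
      exact K_bound γ hγ0 hγ hu.1 t
    -- put everything together
    rw [hE, hE2, hrestr]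
    calc ∫⁻ s in Set.Ioo 0 t, ∫⁻ u in Set.Ioo 0 t, g s u
        ≤ ∫⁻ s in Set.Ioo 0 t,
            ((∫⁻ u in Set.Ioo 0 t, hfun γ s u) + ENNReal.ofReal (8 * s ^ (2 * γ))) := by
          refine lintegral_mono_ae ?_
          filter_upwards [ae_restrict_mem measurableSet_Ioo] with s hs using hinner s hs
      _ = (∫⁻ s in Set.Ioo 0 t, ∫⁻ u in Set.Ioo 0 t, hfun γ s u) +
            ∫⁻ s in Set.Ioo 0 t, ENNReal.ofReal (8 * s ^ (2 * γ)) :=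
          lintegral_add_right _
            (ENNReal.measurable_ofReal.comp ((measurable_rpow_const' (2 * γ)).const_mul 8))
      _ ≤ ENNReal.ofReal (8 * t ^ (2 * γ + 1)) + ENNReal.ofReal (8 * t ^ (2 * γ + 1)) :=
          add_le_add hT1 hIioo
      _ ≤ ENNReal.ofReal (16 * t ^ (2 * γ + 1)) := by
          rw [← ENNReal.ofReal_add (by positivity) (by positivity)]
          refine ENNReal.ofReal_le_ofReal ?_
          have htr : (0:ℝ) ≤ t ^ (2 * γ + 1) := Real.rpow_nonneg ht.le _
          linarith
  constructor
  · exact ⟨16, by norm_num, fun t ht => main t (by linarith)⟩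
  · have hev : ∀ᶠ t : ℝ in atTop,
        (∫⁻ ω, (sojournTime (fun s => B s ω) γ t * ENNReal.ofReal (t ^ (-(γ + 1 / 2)))) ^ 2 ∂P)
          ≤ ENNReal.ofReal 16 := by
      filter_upwards [eventually_ge_atTop (1:ℝ)] with t ht
      have ht0 : (0:ℝ) < t := by linarith
      have hc : (ENNReal.ofReal (t ^ (-(γ + 1 / 2)))) ^ 2 ≠ ⊤ :=
        ENNReal.pow_ne_top ENNReal.ofReal_ne_top
      calc ∫⁻ ω, (sojournTime (fun s => B s ω) γ t * ENNReal.ofReal (t ^ (-(γ + 1 / 2)))) ^ 2 ∂P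
          = ∫⁻ ω, (sojournTime (fun s => B s ω) γ t) ^ 2 *
              (ENNReal.ofReal (t ^ (-(γ + 1 / 2)))) ^ 2 ∂P := by
            simp_rw [mul_pow]
        _ = (∫⁻ ω, (sojournTime (fun s => B s ω) γ t) ^ 2 ∂P) *
              (ENNReal.ofReal (t ^ (-(γ + 1 / 2)))) ^ 2 :=
            lintegral_mul_const' _ _ hc
        _ ≤ ENNReal.ofReal (16 * t ^ (2 * γ + 1)) * (ENNReal.ofReal (t ^ (-(γ + 1 / 2)))) ^ 2 :=
            mul_le_mul' (main t ht0) le_rfl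
        _ = ENNReal.ofReal 16 := by
            rw [← ENNReal.ofReal_pow (Real.rpow_nonneg ht0.le _),
              ← ENNReal.ofReal_mul (by positivity)]
            congr 1
            have e1 : (t ^ (-(γ + 1 / 2))) ^ 2 = t ^ (-(2 * γ + 1)) := by
              rw [sq, ← Real.rpow_add ht0]
              congr 1
              ring
            rw [e1, mul_assoc, ← Real.rpow_add ht0,
              (by ring : (2 * γ + 1) + -(2 * γ + 1) = 0), Real.rpow_zero, mul_one]
    exact lt_of_le_of_lt (Filter.limsup_le_of_le (by isBoundedDefault) hev)
      ENNReal.ofReal_lt_top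


end
end

section
/- Let B be a standard one-dimensional Brownian motion started at 0. With probability one, there exists an integer N ≥ 1 such that for every n ≥ N and every integer ℓ ∈ [2^{n-1}, 2^n − n^{3/2}], at least one of the consecutive unit intervals I_k = [ℓ+k, ℓ+k+1], k = 0, …, ⌈n^{3/2}⌉ − 1, satisfies Osc_{I_k}(B) ≥ log log n. -/
open MeasureTheory Filter Set ProbabilityTheory
open scoped ENNReal NNReal

noncomputable section

/-- The oscillation of `f` on `I`: `Osc_I(f) = sup_I f − inf_I f`. -/
def osc (f : ℝ → ℝ) (I : Set ℝ) : ℝ := sSup (f '' I) - sInf (f '' I)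

lemma osc_ge_abs (f : ℝ → ℝ) (s : ℝ) (hf : ContinuousOn f (Set.Icc s (s+1))) :
    |f (s+1) - f s| ≤ osc f (Set.Icc s (s+1)) := by
  have hcpt : IsCompact (f '' Set.Icc s (s+1)) := isCompact_Icc.image_of_continuousOn hf
  have h1 : f s ∈ f '' Set.Icc s (s+1) := ⟨s, ⟨le_refl _, by linarith⟩, rfl⟩
  have h2 : f (s+1) ∈ f '' Set.Icc s (s+1) := ⟨s+1, ⟨by linarith, le_refl _⟩, rfl⟩
  have hs1 := le_csSup hcpt.bddAbove h1
  have hs2 := le_csSup hcpt.bddAbove h2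
  have hi1 := csInf_le hcpt.bddBelow h1
  have hi2 := csInf_le hcpt.bddBelow h2
  rw [osc]
  rw [abs_le]
  constructor <;> linarith

lemma gauss_pdf_le_one (a : ℝ) : gaussianPDFReal 0 1 a ≤ 1 := by
  rw [gaussianPDFReal]
  have h1 : Real.exp (- (a - 0)^2 / (2 * (1:ℝ≥0))) ≤ 1 := by
    rw [Real.exp_le_one_iff]
    have : (0:ℝ) ≤ (a-0)^2 := sq_nonneg _
    simp only [NNReal.coe_one]
    nlinarith
  have h2 : (1:ℝ) ≤ √(2 * Real.pi * (1:ℝ≥0)) := by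
    rw [show ((1:ℝ)) = √1 by simp]
    apply Real.sqrt_le_sqrt
    simp only [NNReal.coe_one, mul_one]
    nlinarith [Real.pi_gt_three]
  calc (√(2 * Real.pi * (1:ℝ≥0)))⁻¹ * Real.exp (- (a - 0)^2 / (2 * (1:ℝ≥0)))
      ≤ 1 * 1 := by
        apply mul_le_mul _ h1 (Real.exp_nonneg _) zero_le_one
        rw [inv_le_one_iff₀]; right; exact h2
    _ = 1 := by ring

lemma gauss_bound (a : ℝ) (ha : 0 ≤ a) :
    gaussianReal 0 1 {x : ℝ | |x| < a} ≤
      1 - ENNReal.ofReal (gaussianPDFReal 0 1 (a+1)) := by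
  have hq : ENNReal.ofReal (gaussianPDFReal 0 1 (a+1)) ≤ gaussianReal 0 1 (Set.Icc a (a+1)) := by
    rw [gaussianReal_apply 0 one_ne_zero]
    have hle : ∀ x ∈ Set.Icc a (a+1),
        ENNReal.ofReal (gaussianPDFReal 0 1 (a+1)) ≤ gaussianPDF 0 1 x := by
      intro x hx
      rw [gaussianPDF]
      apply ENNReal.ofReal_le_ofReal
      rw [gaussianPDFReal, gaussianPDFReal]
      apply mul_le_mul_of_nonneg_left _ (by positivity)
      apply Real.exp_le_exp.2
      have hx2 : x^2 ≤ (a+1)^2 := sq_le_sq' (by nlinarith [hx.1, hx.2, ha]) (by nlinarith [hx.2])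
      simp only [NNReal.coe_one, sub_zero, mul_one]
      nlinarith
    calc ENNReal.ofReal (gaussianPDFReal 0 1 (a+1))
        = ENNReal.ofReal (gaussianPDFReal 0 1 (a+1)) * volume (Set.Icc a (a+1)) := by
          rw [Real.volume_Icc]
          norm_num
      _ = ∫⁻ _ in Set.Icc a (a+1), ENNReal.ofReal (gaussianPDFReal 0 1 (a+1)) := by
          rw [setLIntegral_const]
      _ ≤ ∫⁻ x in Set.Icc a (a+1), gaussianPDF 0 1 x :=
          setLIntegral_mono (measurable_gaussianPDF 0 1) hle
  have hsub : {x : ℝ | |x| < a} ⊆ (Set.Icc a (a+1))ᶜ := by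
    intro x hx hmem
    exact absurd hx (not_lt.2 (le_trans hmem.1 (le_abs_self x)))
  calc gaussianReal 0 1 {x : ℝ | |x| < a}
      ≤ gaussianReal 0 1 (Set.Icc a (a+1))ᶜ := measure_mono hsub
    _ = 1 - gaussianReal 0 1 (Set.Icc a (a+1)) := by
        rw [measure_compl measurableSet_Icc (measure_ne_top _ _), measure_univ]
    _ ≤ 1 - ENNReal.ofReal (gaussianPDFReal 0 1 (a+1)) := tsub_le_tsub_left hq _

lemma block_prob {Ω : Type*} [MeasurableSpace Ω] (P : Measure Ω) [IsProbabilityMeasure P]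
    (B : ℝ → Ω → ℝ) (hmeas : ∀ t : ℝ, Measurable (B t))
    (hmap : ∀ s t : ℝ, 0 ≤ s → s ≤ t →
      Measure.map (fun ω => B t ω - B s ω) P = gaussianReal 0 (t - s).toNNReal)
    (hindep : ∀ (n : ℕ) (t : Fin (n + 1) → ℝ), (∀ i, 0 ≤ t i) → Monotone t →
      iIndepFun
        (fun i : Fin n => fun ω => B (t i.succ) ω - B (t i.castSucc) ω) P)
    (M : ℕ) (ℓ : ℤ) (hℓ : 0 ≤ ℓ) (a : ℝ) (ha : 0 ≤ a) :
    P (⋂ i : Fin M, {ω | |B ((ℓ:ℝ) + (i:ℕ) + 1) ω - B ((ℓ:ℝ) + (i:ℕ)) ω| < a})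
      ≤ ENNReal.ofReal (Real.exp (-(gaussianPDFReal 0 1 (a+1)) * M)) := by
  set r : ℝ := gaussianPDFReal 0 1 (a+1) with hr
  have hr0 : 0 ≤ r := gaussianPDFReal_nonneg _ _ _
  have hr1 : r ≤ 1 := gauss_pdf_le_one _
  set t : Fin (M+1) → ℝ := fun j => (ℓ:ℝ) + (j:ℕ) with htdef
  have ht0 : ∀ j, 0 ≤ t j := fun j => add_nonneg (by exact_mod_cast hℓ) (Nat.cast_nonneg _)
  have htmono : Monotone t := by
    intro j j' h
    simp only [htdef]
    have : ((j:ℕ):ℝ) ≤ ((j':ℕ):ℝ) := by exact_mod_cast (Fin.le_def.1 h)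
    linarith
  have hI := hindep M t ht0 htmono
  set f : Fin M → Ω → ℝ := fun i ω => B (t i.succ) ω - B (t i.castSucc) ω with hfdef
  have hset : MeasurableSet {x : ℝ | |x| < a} :=
    (isOpen_lt continuous_abs continuous_const).measurableSet
  have key := (iIndepFun_iff_measure_inter_preimage_eq_mul.1 hI) Finset.univ
    (sets := fun _ => {x : ℝ | |x| < a}) (fun i _ => hset)
  have heq : (⋂ i : Fin M, {ω | |B ((ℓ:ℝ) + (i:ℕ) + 1) ω - B ((ℓ:ℝ) + (i:ℕ)) ω| < a})
      = ⋂ i ∈ Finset.univ, f i ⁻¹' {x : ℝ | |x| < a} := by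
    simp only [Finset.mem_univ, Set.iInter_true, hfdef]
    apply Set.iInter_congr
    intro i
    ext ω
    simp only [Set.mem_setOf_eq, Set.mem_preimage, htdef, Fin.val_succ, Fin.coe_castSucc]
    push_cast
    ring_nf
  have hfac : ∀ i : Fin M, P (f i ⁻¹' {x : ℝ | |x| < a}) ≤ 1 - ENNReal.ofReal r := by
    intro i
    have hle : t i.castSucc ≤ t i.succ := htmono (Fin.castSucc_le_succ i)
    have h1 : P (f i ⁻¹' {x : ℝ | |x| < a})
        = (Measure.map (f i) P) {x : ℝ | |x| < a} :=
      (Measure.map_apply ((hmeas _).sub (hmeas _)) hset).symm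
    rw [h1, hmap _ _ (ht0 _) hle]
    have hdiff : t i.succ - t i.castSucc = 1 := by
      simp only [htdef, Fin.val_succ, Fin.coe_castSucc]
      push_cast
      ring
    rw [hdiff, Real.toNNReal_one]
    exact gauss_bound a ha
  calc P (⋂ i : Fin M, {ω | |B ((ℓ:ℝ) + (i:ℕ) + 1) ω - B ((ℓ:ℝ) + (i:ℕ)) ω| < a})
      = ∏ i : Fin M, P (f i ⁻¹' {x : ℝ | |x| < a}) := by rw [heq, key]
    _ ≤ ∏ _i : Fin M, (1 - ENNReal.ofReal r) :=
        Finset.prod_le_prod' (fun i _ => hfac i)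
    _ = (1 - ENNReal.ofReal r) ^ M := by
        rw [Finset.prod_const, Finset.card_univ, Fintype.card_fin]
    _ = ENNReal.ofReal (1 - r) ^ M := by
        rw [ENNReal.ofReal_sub 1 hr0, ENNReal.ofReal_one]
    _ = ENNReal.ofReal ((1 - r) ^ M) := by
        rw [ENNReal.ofReal_pow (by linarith)]
    _ ≤ ENNReal.ofReal (Real.exp (-r * M)) := by
        apply ENNReal.ofReal_le_ofReal
        have h1 : 1 - r ≤ Real.exp (-r) := by
          have := Real.add_one_le_exp (-r)
          linarith
        calc (1 - r) ^ M ≤ Real.exp (-r) ^ M := pow_le_pow_left₀ (by linarith) h1 M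
          _ = Real.exp (-r * M) := by
              rw [← Real.exp_nat_mul]; ring_nf

lemma core_arith (n : ℕ) (h1 : 1 ≤ Real.log (Real.log n))
    (h2 : (Real.log (Real.log n) + 1)^2 ≤ Real.log n / 8)
    (h3 : 8 ≤ Real.log n) (h4 : 1 ≤ n) :
    (2:ℝ)^n * Real.exp (-(gaussianPDFReal 0 1 (Real.log (Real.log n) + 1))
      * (Nat.ceil ((n:ℝ) ^ ((3:ℝ)/2)) : ℕ)) ≤ (1/2)^n := by
  set a : ℝ := Real.log (Real.log n) with ha
  set r : ℝ := gaussianPDFReal 0 1 (a + 1) with hrdef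
  set M : ℕ := Nat.ceil ((n:ℝ) ^ ((3:ℝ)/2)) with hM
  have hn0 : (0:ℝ) < n := by exact_mod_cast h4
  have hr0 : 0 ≤ r := gaussianPDFReal_nonneg _ _ _
  -- r ≥ exp(-(a+1)^2)
  have hsq : Real.sqrt (2 * Real.pi) ≤ Real.exp 1 := by
    have h2pi : 2 * Real.pi ≤ (Real.exp 1)^2 := by
      nlinarith [Real.pi_lt_d2, Real.exp_one_gt_d9]
    calc Real.sqrt (2 * Real.pi) ≤ Real.sqrt ((Real.exp 1)^2) := Real.sqrt_le_sqrt h2pi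
      _ = Real.exp 1 := Real.sqrt_sq (Real.exp_pos 1).le
  have hrlow : Real.exp (-(a+1)^2) ≤ r := by
    rw [hrdef, gaussianPDFReal]
    simp only [NNReal.coe_one, mul_one, sub_zero]
    have hinv : (Real.exp 1)⁻¹ ≤ (Real.sqrt (2 * Real.pi))⁻¹ := by
      apply inv_anti₀ (Real.sqrt_pos.2 (by positivity)) hsq
    calc Real.exp (-(a+1)^2)
        ≤ Real.exp (-1) * Real.exp (- (a+1)^2 / 2) := by
          rw [← Real.exp_add]
          apply Real.exp_le_exp.2
          nlinarith
      _ = (Real.exp 1)⁻¹ * Real.exp (- (a+1)^2 / 2) := by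
          rw [Real.exp_neg]
      _ ≤ (Real.sqrt (2 * Real.pi))⁻¹ * Real.exp (- (a+1)^2 / 2) :=
          mul_le_mul_of_nonneg_right hinv (Real.exp_nonneg _)
  -- M ≥ n * n^(1/2)
  have hMlow : (n:ℝ) * (n:ℝ) ^ ((1:ℝ)/2) ≤ (M:ℕ) := by
    calc (n:ℝ) * (n:ℝ) ^ ((1:ℝ)/2) = (n:ℝ) ^ ((3:ℝ)/2) := by
          rw [show (3:ℝ)/2 = 1 + 1/2 by norm_num, Real.rpow_add hn0, Real.rpow_one]
      _ ≤ (M:ℕ) := Nat.le_ceil _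
  -- n^(1/2) ≥ 2 * exp((a+1)^2)
  have hsqrt : 2 * Real.exp ((a+1)^2) ≤ (n:ℝ) ^ ((1:ℝ)/2) := by
    rw [Real.rpow_def_of_pos hn0]
    have hlog2 : Real.log 2 ≤ 1 := by
      rw [← Real.log_exp 1]
      apply Real.log_le_log two_pos
      nlinarith [Real.exp_one_gt_d9]
    calc 2 * Real.exp ((a+1)^2) = Real.exp (Real.log 2 + (a+1)^2) := by
          rw [Real.exp_add, Real.exp_log two_pos]
      _ ≤ Real.exp (Real.log n * (1/2)) := by
          apply Real.exp_le_exp.2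
          nlinarith
  -- r * M ≥ 2n
  have hrM : 2 * (n:ℝ) ≤ r * M := by
    have h5 : 0 ≤ (n:ℝ) ^ ((1:ℝ)/2) := Real.rpow_nonneg hn0.le _
    calc 2 * (n:ℝ) = Real.exp (-(a+1)^2) * ((n:ℝ) * (2 * Real.exp ((a+1)^2))) := by
          rw [show Real.exp (-(a+1)^2) * ((n:ℝ) * (2 * Real.exp ((a+1)^2)))
              = (Real.exp (-(a+1)^2) * Real.exp ((a+1)^2)) * (2 * (n:ℝ)) by ring,
            ← Real.exp_add]
          simp
      _ ≤ Real.exp (-(a+1)^2) * ((n:ℝ) * (n:ℝ) ^ ((1:ℝ)/2)) := by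
          apply mul_le_mul_of_nonneg_left _ (Real.exp_nonneg _)
          exact mul_le_mul_of_nonneg_left hsqrt hn0.le
      _ ≤ r * M := by
          apply mul_le_mul hrlow hMlow (by positivity) hr0
  -- conclude
  have hexp : Real.exp (-r * M) ≤ Real.exp (-(2 * n)) :=
    Real.exp_le_exp.2 (by linarith)
  have h4n : (4:ℝ)^n ≤ Real.exp (2 * n) := by
    have : Real.exp (2 * (n:ℝ)) = (Real.exp 2)^n := by
      rw [mul_comm, Real.exp_nat_mul]
    rw [this]
    apply pow_le_pow_left₀ (by norm_num)
    · rw [show (2:ℝ) = 1 + 1 by norm_num, Real.exp_add]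
      nlinarith [Real.exp_one_gt_d9]
  calc (2:ℝ)^n * Real.exp (-r * M) ≤ (2:ℝ)^n * Real.exp (-(2 * n)) := by
        apply mul_le_mul_of_nonneg_left hexp (by positivity)
    _ ≤ (2:ℝ)^n * ((4:ℝ)^n)⁻¹ := by
        apply mul_le_mul_of_nonneg_left _ (by positivity)
        rw [Real.exp_neg]
        exact inv_anti₀ (by positivity) h4n
    _ = (1/2:ℝ)^n := by
        rw [show (4:ℝ) = 2 * 2 by norm_num, mul_pow, div_pow, one_pow]
        field_simp

lemma annulus_prob {Ω : Type*} [MeasurableSpace Ω] (P : Measure Ω) [IsProbabilityMeasure P]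
    (B : ℝ → Ω → ℝ) (hmeas : ∀ t : ℝ, Measurable (B t))
    (hmap : ∀ s t : ℝ, 0 ≤ s → s ≤ t →
      Measure.map (fun ω => B t ω - B s ω) P = gaussianReal 0 (t - s).toNNReal)
    (hindep : ∀ (n : ℕ) (t : Fin (n + 1) → ℝ), (∀ i, 0 ≤ t i) → Monotone t →
      iIndepFun
        (fun i : Fin n => fun ω => B (t i.succ) ω - B (t i.castSucc) ω) P)
    (n : ℕ) (h1 : 1 ≤ Real.log (Real.log n))
    (h2 : (Real.log (Real.log n) + 1)^2 ≤ Real.log n / 8)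
    (h3 : 8 ≤ Real.log n) (h4 : 1 ≤ n) :
    P (⋃ ℓ ∈ Finset.Icc ((2:ℤ)^(n-1)) ((2:ℤ)^n),
        ⋂ i : Fin (Nat.ceil ((n:ℝ) ^ ((3:ℝ)/2))),
          {ω | |B ((ℓ:ℝ) + (i:ℕ) + 1) ω - B ((ℓ:ℝ) + (i:ℕ)) ω| < Real.log (Real.log n)})
      ≤ ENNReal.ofReal ((1/2:ℝ)^n) := by
  set a : ℝ := Real.log (Real.log n) with hadef
  set M : ℕ := Nat.ceil ((n:ℝ) ^ ((3:ℝ)/2)) with hMdef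
  set T : Finset ℤ := Finset.Icc ((2:ℤ)^(n-1)) ((2:ℤ)^n) with hTdef
  set bnd : ℝ≥0∞ := ENNReal.ofReal (Real.exp (-(gaussianPDFReal 0 1 (a+1)) * M)) with hbnd
  have ha0 : 0 ≤ a := by linarith
  have hE : ∀ ℓ ∈ T, P (⋂ i : Fin M,
      {ω | |B ((ℓ:ℝ) + (i:ℕ) + 1) ω - B ((ℓ:ℝ) + (i:ℕ)) ω| < a}) ≤ bnd := by
    intro ℓ hℓ
    have hℓ0 : 0 ≤ ℓ := le_trans (pow_nonneg (by norm_num) _) (Finset.mem_Icc.1 hℓ).1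
    exact block_prob P B hmeas hmap hindep M ℓ hℓ0 a ha0
  have hcard : (T.card : ℝ≥0∞) ≤ (2:ℝ≥0∞)^n := by
    have h1' : T.card ≤ 2^n := by
      rw [hTdef, Int.card_Icc]
      have : ((2:ℤ)^n + 1 - (2:ℤ)^(n-1)) ≤ ((2^n : ℕ) : ℤ) := by
        push_cast
        have : (1:ℤ) ≤ 2^(n-1) := one_le_pow₀ one_le_two
        linarith
      exact Int.toNat_le.2 this
    calc (T.card : ℝ≥0∞) ≤ ((2^n : ℕ) : ℝ≥0∞) := by exact_mod_cast h1'
      _ = (2:ℝ≥0∞)^n := by push_cast; ring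
  calc P (⋃ ℓ ∈ T, ⋂ i : Fin M,
        {ω | |B ((ℓ:ℝ) + (i:ℕ) + 1) ω - B ((ℓ:ℝ) + (i:ℕ)) ω| < a})
      ≤ ∑ ℓ ∈ T, P (⋂ i : Fin M,
        {ω | |B ((ℓ:ℝ) + (i:ℕ) + 1) ω - B ((ℓ:ℝ) + (i:ℕ)) ω| < a}) :=
        measure_biUnion_finset_le _ _
    _ ≤ T.card • bnd := Finset.sum_le_card_nsmul _ _ _ hE
    _ = (T.card : ℝ≥0∞) * bnd := by rw [nsmul_eq_mul]
    _ ≤ (2:ℝ≥0∞)^n * bnd := mul_le_mul_left hcard _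
    _ ≤ ENNReal.ofReal ((1/2:ℝ)^n) := by
        rw [hbnd, show (2:ℝ≥0∞)^n = ENNReal.ofReal ((2:ℝ)^n) by
          rw [ENNReal.ofReal_pow (by norm_num)]; norm_num,
          ← ENNReal.ofReal_mul (by positivity)]
        exact ENNReal.ofReal_le_ofReal (core_arith n h1 h2 h3 h4)

lemma log_sq_ev : ∀ᶠ (u:ℝ) in atTop, (Real.log u + 1)^2 ≤ u / 8 := by
  have h := (isLittleO_log_rpow_atTop (show (0:ℝ) < 1/4 by norm_num)).def one_pos
  filter_upwards [h, eventually_ge_atTop (10^6 : ℝ)] with u hu1 hu2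
  have hu0 : (0:ℝ) < u := by linarith
  set v : ℝ := u ^ ((1:ℝ)/4) with hv
  have hv0 : 0 ≤ v := Real.rpow_nonneg hu0.le _
  have hv4 : v^(4:ℕ) = u := by
    rw [hv, ← Real.rpow_natCast (u ^ ((1:ℝ)/4)) 4, ← Real.rpow_mul hu0.le]
    norm_num
  have hlogv : Real.log u ≤ v := by
    have h1 : |Real.log u| ≤ 1 * |v| := by
      simpa [Real.norm_eq_abs] using hu1
    calc Real.log u ≤ |Real.log u| := le_abs_self _
      _ ≤ 1 * |v| := h1
      _ = v := by rw [one_mul, abs_of_nonneg hv0]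
  have hv10 : 10 ≤ v := by
    by_contra hlt
    push_neg at hlt
    have h4 : v^(4:ℕ) < 10^(4:ℕ) := by
      apply pow_lt_pow_left₀ hlt hv0
      norm_num
    rw [hv4] at h4
    norm_num at h4
    linarith
  have hlogu0 : 0 ≤ Real.log u := Real.log_nonneg (by linarith)
  have hstep1 : (Real.log u + 1)^2 ≤ (v+1)^2 := by nlinarith [hlogv, hlogu0]
  have hstep2 : (v+1)^2 ≤ v^(4:ℕ)/8 := by
    nlinarith [mul_nonneg (sub_nonneg.2 hv10) (mul_nonneg (mul_nonneg hv0 hv0) hv0),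
      hv10, hv0, mul_nonneg (sub_nonneg.2 hv10) hv0]
  rw [hv4] at hstep2
  linarith

lemma evcond : ∀ᶠ (n:ℕ) in atTop, 1 ≤ Real.log (Real.log n) ∧
    (Real.log (Real.log n) + 1)^2 ≤ Real.log n / 8 ∧ 8 ≤ Real.log n ∧ 1 ≤ n := by
  have hlog : Tendsto (fun n:ℕ => Real.log n) atTop atTop :=
    Real.tendsto_log_atTop.comp tendsto_natCast_atTop_atTop
  have hloglog : Tendsto (fun n:ℕ => Real.log (Real.log n)) atTop atTop :=
    Real.tendsto_log_atTop.comp hlog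
  filter_upwards [hloglog.eventually_ge_atTop 1, hlog.eventually log_sq_ev,
    hlog.eventually_ge_atTop 8, eventually_ge_atTop 1] with n p1 p2 p3 p4
  exact ⟨p1, p2, p3, p4⟩

/-- with probability one, for all large `n`, every block of `⌈n^{3/2}⌉`
consecutive unit intervals starting at an integer `ℓ ∈ [2^{n-1}, 2^n − n^{3/2}]` contains a
unit interval on which the oscillation of `B` is at least `log log n`. -/
theorem oscillation_in_blocks {Ω : Type*} [MeasurableSpace Ω] (P : Measure Ω)
    (B : ℝ → Ω → ℝ) (hB : IsStandardBrownianMotion P B) :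
    ∀ᵐ ω ∂P, ∃ N : ℕ, 1 ≤ N ∧ ∀ n : ℕ, N ≤ n → ∀ ℓ : ℤ,
      (2 : ℝ) ^ (n - 1) ≤ (ℓ : ℝ) → (ℓ : ℝ) ≤ (2 : ℝ) ^ n - (n : ℝ) ^ ((3 : ℝ) / 2) →
      ∃ k : ℕ, k < Nat.ceil ((n : ℝ) ^ ((3 : ℝ) / 2)) ∧
        Real.log (Real.log (n : ℝ)) ≤
          osc (fun t => B t ω) (Set.Icc ((ℓ : ℝ) + (k : ℝ)) ((ℓ : ℝ) + (k : ℝ) + 1)) := by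
  obtain ⟨hP, hmeas, hzero, hcont, hmap, hindep⟩ := hB
  haveI := hP
  set s : ℕ → Set Ω := fun n => ⋃ ℓ ∈ Finset.Icc ((2:ℤ)^(n-1)) ((2:ℤ)^n),
      ⋂ i : Fin (Nat.ceil ((n:ℝ) ^ ((3:ℝ)/2))),
        {ω | |B ((ℓ:ℝ) + (i:ℕ) + 1) ω - B ((ℓ:ℝ) + (i:ℕ)) ω| < Real.log (Real.log n)}
    with hsdef
  obtain ⟨N₀, hN₀⟩ := eventually_atTop.1 evcond
  -- Borel–Cantelli
  have hbound : ∀ k : ℕ, P (s (N₀ + k)) ≤ (ENNReal.ofReal (1/2))^k := by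
    intro k
    obtain ⟨p1, p2, p3, p4⟩ := hN₀ (N₀ + k) (Nat.le_add_right _ _)
    calc P (s (N₀ + k)) ≤ ENNReal.ofReal ((1/2:ℝ)^(N₀+k)) :=
          annulus_prob P B hmeas hmap hindep (N₀+k) p1 p2 p3 p4
      _ ≤ ENNReal.ofReal ((1/2:ℝ)^k) := by
          apply ENNReal.ofReal_le_ofReal
          apply pow_le_pow_of_le_one (by norm_num) (by norm_num)
          omega
      _ = (ENNReal.ofReal (1/2))^k := by
          rw [ENNReal.ofReal_pow (by norm_num)]
  have hsum : (∑' k, P (s (N₀ + k))) ≠ ⊤ := by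
    apply ne_top_of_le_ne_top _ (ENNReal.tsum_le_tsum hbound)
    rw [ENNReal.tsum_geometric]
    apply ENNReal.inv_ne_top.2
    rw [ne_eq, tsub_eq_zero_iff_le, not_le]
    calc ENNReal.ofReal (1/2) < ENNReal.ofReal 1 := by
          rw [ENNReal.ofReal_lt_ofReal_iff] <;> norm_num
      _ = 1 := ENNReal.ofReal_one
  filter_upwards [ae_eventually_notMem hsum] with ω hω
  obtain ⟨K, hK⟩ := eventually_atTop.1 hω
  refine ⟨N₀ + K + 1, by omega, ?_⟩
  intro n hn ℓ hℓ1 hℓ2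
  have hnN₀ : N₀ ≤ n := by omega
  have hωn : ω ∉ s n := by
    have := hK (n - N₀) (by omega)
    rwa [show N₀ + (n - N₀) = n by omega] at this
  obtain ⟨p1, p2, p3, p4⟩ := hN₀ n hnN₀
  have hrpow_nonneg : (0:ℝ) ≤ (n:ℝ) ^ ((3:ℝ)/2) := Real.rpow_nonneg (Nat.cast_nonneg n) _
  have hTℓ : ℓ ∈ Finset.Icc ((2:ℤ)^(n-1)) ((2:ℤ)^n) := by
    refine Finset.mem_Icc.2 ⟨?_, ?_⟩
    · have : (((2:ℤ)^(n-1) : ℤ) : ℝ) ≤ (ℓ:ℝ) := by push_cast; exact hℓ1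
      exact_mod_cast this
    · have : (ℓ:ℝ) ≤ (((2:ℤ)^n : ℤ) : ℝ) := by push_cast; linarith
      exact_mod_cast this
  have hnotE : ω ∉ ⋂ i : Fin (Nat.ceil ((n:ℝ) ^ ((3:ℝ)/2))),
      {ω | |B ((ℓ:ℝ) + (i:ℕ) + 1) ω - B ((ℓ:ℝ) + (i:ℕ)) ω| < Real.log (Real.log n)} := by
    intro hmem
    exact hωn (Set.mem_biUnion hTℓ hmem)
  rw [Set.mem_iInter] at hnotE
  push_neg at hnotE
  obtain ⟨i, hi⟩ := hnotE
  rw [Set.mem_setOf_eq, not_lt] at hi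
  refine ⟨i.val, i.isLt, ?_⟩
  have hℓpos : (0:ℝ) ≤ (ℓ:ℝ) := le_trans (by positivity) hℓ1
  have hsub : Set.Icc ((ℓ:ℝ) + (i:ℕ)) ((ℓ:ℝ) + (i:ℕ) + 1) ⊆ Set.Ici 0 := by
    intro x hx
    have : (0:ℝ) ≤ (ℓ:ℝ) + (i:ℕ) := by positivity
    exact le_trans this hx.1
  have hosc := osc_ge_abs (fun t => B t ω) ((ℓ:ℝ) + (i:ℕ)) ((hcont ω).mono hsub)
  calc Real.log (Real.log n) ≤ |B ((ℓ:ℝ) + (i:ℕ) + 1) ω - B ((ℓ:ℝ) + (i:ℕ)) ω| := hi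
    _ ≤ osc (fun t => B t ω) (Set.Icc ((ℓ:ℝ) + (i:ℕ)) ((ℓ:ℝ) + (i:ℕ) + 1)) := hosc

end
end
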